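/- Let V be a countable set partitioned into layers V = V_0 ⊔ V_1 ⊔ V_2 ⊔ …, and let p be a Markov transition kernel on V such that p(x,·) is supported on V_{i+1} whenever x ∈ V_i. Then for all x, y ∈ V the limit d(x,y) := lim_{n→∞} d_TV( law of X_n^{(x)}, law of X_n^{(y)} ) exists (the sequence being nonincreasing in n), and d(x,y) = (1/2) · sup{ |h(x) − h(y)| : h : V → ℝ, ‖h‖_∞ ≤ 1, and h(z) = Σ_w p(z,w) h(w) for every z ∈ V }. -/

import Mathlib

noncomputable section

namespace LayeredChain

attribute [local instance] Classical.propDecidable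

/-- The `n`-step transition probabilities of the Markov kernel `p`. -/
def pstep {V : Type*} (p : V → V → ℝ) : ℕ → V → V → ℝ
  | 0, x, y => if x = y then 1 else 0
  | (k + 1), x, y => ∑' z, pstep p k x z * p z y

/-- The total variation distance between the laws of `X_n^{(x)}` and `X_n^{(y)}` (the chains
started at `x`, resp. `y`, observed at layer `n`). -/
def tvAt {V : Type*} (p : V → V → ℝ) (layer : V → ℕ) (x y : V) (n : ℕ) : ℝ :=
  (1 / 2) * ∑' v, |pstep p (n - layer x) x v - pstep p (n - layer y) y v|

set_option linter.unusedSectionVars false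
set_option linter.unusedVariables false

lemma pstep_succ {V : Type*} (p : V → V → ℝ) (k : ℕ) (x y : V) :
    pstep p (k + 1) x y = ∑' z, pstep p k x z * p z y := rfl

lemma pstep_zero_self {V : Type*} (p : V → V → ℝ) (v : V) : pstep p 0 v v = 1 := by
  simp [pstep]

lemma pstep_zero_ne {V : Type*} (p : V → V → ℝ) {w v : V} (h : w ≠ v) : pstep p 0 w v = 0 := by
  simp [pstep, h]

lemma abs_tsum_le_tsum_abs {V : Type*} (f : V → ℝ) (h1 : Summable fun v => |f v|) :
    |∑' v, f v| ≤ ∑' v, |f v| := by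
  have h2 : Summable fun v => ‖f v‖ := by simpa only [Real.norm_eq_abs] using h1
  have := norm_tsum_le_tsum_norm h2
  simpa only [Real.norm_eq_abs] using this

lemma summable_uncurry_nonneg {V : Type*} [Countable V] (f : V → V → ℝ)
    (h0 : ∀ a b, 0 ≤ f a b) (hrow : ∀ a, Summable (f a))
    (hs : Summable fun a => ∑' b, f a b) : Summable (Function.uncurry f) :=
  (summable_prod_of_nonneg (fun q => h0 q.1 q.2)).mpr ⟨hrow, hs⟩

lemma fubini_nonneg {V : Type*} [Countable V] (f : V → V → ℝ)
    (h0 : ∀ a b, 0 ≤ f a b) (hrow : ∀ a, Summable (f a))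
    (hs : Summable fun a => ∑' b, f a b) :
    ∑' b, ∑' a, f a b = ∑' a, ∑' b, f a b :=
  Summable.tsum_comm (summable_uncurry_nonneg f h0 hrow hs)

lemma summable_snd_marginal {V : Type*} [Countable V] (f : V → V → ℝ)
    (h : Summable (Function.uncurry f)) : Summable fun b => ∑' a, f a b := by
  have h2 : Summable ((Function.uncurry f) ∘ Prod.swap) := h.prod_symm
  exact Summable.prod h2

section Aux

variable {V : Type*} [Countable V] {p : V → V → ℝ}

lemma summable_p (hp1 : ∀ x, ∑' y, p x y = 1) (x : V) : Summable (p x) := by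
  by_contra h
  have h0 := tsum_eq_zero_of_not_summable h
  rw [hp1 x] at h0
  norm_num at h0

lemma pstep_nonneg (hp0 : ∀ x y, 0 ≤ p x y) : ∀ (m : ℕ) (x y : V), 0 ≤ pstep p m x y := by
  intro m
  induction m with
  | zero => intro x y; simp only [pstep]; split <;> norm_num
  | succ k ih =>
    intro x y
    exact tsum_nonneg fun z => mul_nonneg (ih x z) (hp0 z y)

lemma pstep_summable_tsum (hp0 : ∀ x y, 0 ≤ p x y) (hp1 : ∀ x, ∑' y, p x y = 1) :
    ∀ (m : ℕ) (x : V), Summable (pstep p m x) ∧ ∑' y, pstep p m x y = 1 := by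
  intro m
  induction m with
  | zero =>
    intro x
    have h : (fun y => pstep p 0 x y) = fun y => if y = x then (1:ℝ) else 0 := by
      funext y
      simp only [pstep, eq_comm]
    have hs : HasSum (fun y => pstep p 0 x y) 1 := by
      rw [h]; exact hasSum_ite_eq x 1
    exact ⟨hs.summable, hs.tsum_eq⟩
  | succ k ih =>
    intro x
    have hrowt : ∀ z, ∑' y, pstep p k x z * p z y = pstep p k x z := by
      intro z; rw [tsum_mul_left, hp1 z, mul_one]
    have hrow : ∀ z, Summable fun y => pstep p k x z * p z y :=
      fun z => (summable_p hp1 z).mul_left _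
    have hsmar : Summable fun z => ∑' y, pstep p k x z * p z y := by
      simp only [hrowt]; exact (ih x).1
    have hcomm : ∑' y, ∑' z, pstep p k x z * p z y = ∑' z, ∑' y, pstep p k x z * p z y :=
      fubini_nonneg _ (fun z y => mul_nonneg (pstep_nonneg hp0 k x z) (hp0 z y)) hrow hsmar
    have htsum : ∑' y, pstep p (k+1) x y = 1 := by
      simp only [pstep_succ]
      rw [hcomm]
      simp only [hrowt]
      exact (ih x).2
    refine ⟨?_, htsum⟩
    by_contra hns
    have h0 := tsum_eq_zero_of_not_summable hns
    rw [htsum] at h0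
    norm_num at h0

lemma pstep_summable (hp0 : ∀ x y, 0 ≤ p x y) (hp1 : ∀ x, ∑' y, p x y = 1) (m : ℕ) (x : V) :
    Summable (pstep p m x) := (pstep_summable_tsum hp0 hp1 m x).1

lemma pstep_tsum (hp0 : ∀ x y, 0 ≤ p x y) (hp1 : ∀ x, ∑' y, p x y = 1) (m : ℕ) (x : V) :
    ∑' y, pstep p m x y = 1 := (pstep_summable_tsum hp0 hp1 m x).2

lemma pstep_le_one (hp0 : ∀ x y, 0 ≤ p x y) (hp1 : ∀ x, ∑' y, p x y = 1) (m : ℕ) (x v : V) :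
    pstep p m x v ≤ 1 := by
  rw [← pstep_tsum hp0 hp1 m x]
  exact Summable.le_tsum (pstep_summable hp0 hp1 m x) v (fun j _ => pstep_nonneg hp0 m x j)

lemma p_le_one (hp0 : ∀ x y, 0 ≤ p x y) (hp1 : ∀ x, ∑' y, p x y = 1) (x v : V) :
    p x v ≤ 1 := by
  rw [← hp1 x]
  exact Summable.le_tsum (summable_p hp1 x) v (fun j _ => hp0 x j)

lemma summable_weight {q g : V → ℝ} (hq : Summable q) (hq0 : ∀ v, 0 ≤ q v)
    (hb : ∀ v, |g v| ≤ 1) : Summable fun v => q v * g v := by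
  apply Summable.of_norm_bounded hq
  intro v
  rw [Real.norm_eq_abs, abs_mul, abs_of_nonneg (hq0 v)]
  calc q v * |g v| ≤ q v * 1 := mul_le_mul_of_nonneg_left (hb v) (hq0 v)
    _ = q v := mul_one _

lemma summable_abs_weight {q g : V → ℝ} (hq : Summable q) (hq0 : ∀ v, 0 ≤ q v)
    (hb : ∀ v, |g v| ≤ 1) : Summable fun v => |q v * g v| := by
  apply Summable.of_nonneg_of_le (fun v => abs_nonneg _) _ hq
  intro v
  rw [abs_mul, abs_of_nonneg (hq0 v)]
  calc q v * |g v| ≤ q v * 1 := mul_le_mul_of_nonneg_left (hb v) (hq0 v)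
    _ = q v := mul_one _

lemma abs_tsum_weight {q g : V → ℝ} (hq : Summable q) (hq0 : ∀ v, 0 ≤ q v)
    (hb : ∀ v, |g v| ≤ 1) (hq1 : ∑' v, q v = 1) : |∑' v, q v * g v| ≤ 1 := by
  have h1 : Summable fun v => |q v * g v| := summable_abs_weight hq hq0 hb
  calc |∑' v, q v * g v| ≤ ∑' v, |q v * g v| := abs_tsum_le_tsum_abs _ h1
    _ ≤ ∑' v, q v := by
        apply Summable.tsum_le_tsum _ h1 hq
        intro v
        rw [abs_mul, abs_of_nonneg (hq0 v)]
        calc q v * |g v| ≤ q v * 1 := mul_le_mul_of_nonneg_left (hb v) (hq0 v)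
          _ = q v := mul_one _
    _ = 1 := hq1

/-- Chapman-Kolmogorov -/
lemma pstep_add (hp0 : ∀ x y, 0 ≤ p x y) (hp1 : ∀ x, ∑' y, p x y = 1) :
    ∀ (b a : ℕ) (x v : V), pstep p (a + b) x v = ∑' w, pstep p a x w * pstep p b w v := by
  intro b
  induction b with
  | zero =>
    intro a x v
    rw [tsum_eq_single v]
    · rw [pstep_zero_self, mul_one, Nat.add_zero]
    · intro w hw
      rw [pstep_zero_ne p hw, mul_zero]
  | succ b ih =>
    intro a x v
    have key : ∀ w, Summable fun z => pstep p b w z * p z v := by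
      intro w
      apply Summable.of_nonneg_of_le
        (fun z => mul_nonneg (pstep_nonneg hp0 b w z) (hp0 z v))
        (fun z => ?_) (pstep_summable hp0 hp1 b w)
      calc pstep p b w z * p z v ≤ pstep p b w z * 1 :=
            mul_le_mul_of_nonneg_left (p_le_one hp0 hp1 z v) (pstep_nonneg hp0 b w z)
        _ = pstep p b w z := mul_one _
    have hrow : ∀ w, Summable fun z => pstep p a x w * (pstep p b w z * p z v) :=
      fun w => (key w).mul_left _
    have hrowt : ∀ w, ∑' z, pstep p a x w * (pstep p b w z * p z v)
        = pstep p a x w * pstep p (b+1) w v := by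
      intro w
      rw [tsum_mul_left, pstep_succ]
    have hs : Summable fun w => ∑' z, pstep p a x w * (pstep p b w z * p z v) := by
      simp only [hrowt]
      apply Summable.of_nonneg_of_le
        (fun w => mul_nonneg (pstep_nonneg hp0 a x w) (pstep_nonneg hp0 (b+1) w v))
        (fun w => ?_) (pstep_summable hp0 hp1 a x)
      calc pstep p a x w * pstep p (b+1) w v ≤ pstep p a x w * 1 :=
            mul_le_mul_of_nonneg_left (pstep_le_one hp0 hp1 (b+1) w v) (pstep_nonneg hp0 a x w)
        _ = pstep p a x w := mul_one _
    have hab : a + (b + 1) = (a + b) + 1 := by omega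
    rw [hab, pstep_succ]
    calc ∑' z, pstep p (a + b) x z * p z v
        = ∑' z, ∑' w, pstep p a x w * (pstep p b w z * p z v) := by
          apply tsum_congr; intro z
          rw [ih a x z, ← tsum_mul_right]
          apply tsum_congr; intro w
          ring
      _ = ∑' w, ∑' z, pstep p a x w * (pstep p b w z * p z v) := by
          apply fubini_nonneg _
            (fun w z => mul_nonneg (pstep_nonneg hp0 a x w)
              (mul_nonneg (pstep_nonneg hp0 b w z) (hp0 z v))) hrow hs
      _ = ∑' w, pstep p a x w * pstep p (b+1) w v := tsum_congr hrowt

lemma pstep_one (hp1 : ∀ x, ∑' y, p x y = 1) (z u : V) : pstep p 1 z u = p z u := by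
  show ∑' t, pstep p 0 z t * p t u = p z u
  rw [tsum_eq_single z]
  · rw [pstep_zero_self, one_mul]
  · intro t ht
    rw [pstep_zero_ne p (Ne.symm ht), zero_mul]

/-- Iterated harmonicity for bounded harmonic functions. -/
lemma harmonic_iterate (hp0 : ∀ x y, 0 ≤ p x y) (hp1 : ∀ x, ∑' y, p x y = 1)
    {h : V → ℝ} (hb : ∀ v, |h v| ≤ 1) (hh : ∀ z, h z = ∑' w, p z w * h w) :
    ∀ (m : ℕ) (x : V), h x = ∑' w, pstep p m x w * h w := by
  intro m
  induction m with
  | zero =>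
    intro x
    rw [tsum_eq_single x]
    · rw [pstep_zero_self, one_mul]
    · intro w hw
      rw [pstep_zero_ne p (Ne.symm hw), zero_mul]
  | succ m ih =>
    intro x
    have hG : Summable (Function.uncurry fun w z => pstep p m x w * p w z) := by
      apply summable_uncurry_nonneg
      · exact fun w z => mul_nonneg (pstep_nonneg hp0 m x w) (hp0 w z)
      · exact fun w => (summable_p hp1 w).mul_left _
      · have he : (fun w => ∑' z, pstep p m x w * p w z) = fun w => pstep p m x w := by
          funext w; rw [tsum_mul_left, hp1 w, mul_one]
        rw [he]; exact pstep_summable hp0 hp1 m x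
    have hF : Summable (Function.uncurry fun w z => pstep p m x w * (p w z * h z)) := by
      apply Summable.of_norm_bounded hG
      rintro ⟨w, z⟩
      simp only [Function.uncurry_apply_pair, Real.norm_eq_abs]
      rw [abs_mul, abs_mul, abs_of_nonneg (pstep_nonneg hp0 m x w), abs_of_nonneg (hp0 w z)]
      apply mul_le_mul_of_nonneg_left _ (pstep_nonneg hp0 m x w)
      calc p w z * |h z| ≤ p w z * 1 := mul_le_mul_of_nonneg_left (hb z) (hp0 w z)
        _ = p w z := mul_one _
    calc h x = ∑' w, pstep p m x w * h w := ih x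
      _ = ∑' w, pstep p m x w * ∑' z, p w z * h z := by
          apply tsum_congr; intro w; rw [← hh w]
      _ = ∑' w, ∑' z, pstep p m x w * (p w z * h z) := by
          apply tsum_congr; intro w; rw [tsum_mul_left]
      _ = ∑' z, ∑' w, pstep p m x w * (p w z * h z) := (Summable.tsum_comm hF).symm
      _ = ∑' z, pstep p (m+1) x z * h z := by
          apply tsum_congr; intro z
          rw [pstep_succ, ← tsum_mul_right]
          apply tsum_congr; intro w
          ring


/-- The total variation distance between the laws of `X_n^{(x)}` and `X_n^{(y)}` (the chains
started at `x`, resp. `y`, observed at layer `n`). -/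
def tvAt' {V : Type*} (p : V → V → ℝ) (layer : V → ℕ) (x y : V) (n : ℕ) : ℝ :=
  (1 / 2) * ∑' v, |pstep p (n - layer x) x v - pstep p (n - layer y) y v|

lemma tvAt'_mono {p : V → V → ℝ} (layer : V → ℕ)
    (hp0 : ∀ x y, 0 ≤ p x y) (hp1 : ∀ x, ∑' y, p x y = 1) (x y : V) {m n : ℕ}
    (hm : max (layer x) (layer y) ≤ m) (hmn : m ≤ n) :
    tvAt' p layer x y n ≤ tvAt' p layer x y m := by
  have hlx : layer x ≤ m := le_trans (le_max_left _ _) hm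
  have hly : layer y ≤ m := le_trans (le_max_right _ _) hm
  set k := n - m with hk
  have hax : n - layer x = (m - layer x) + k := by omega
  have hay : n - layer y = (m - layer y) + k := by omega
  have hsa : Summable fun w => pstep p (m - layer x) x w := pstep_summable hp0 hp1 _ _
  have hsb : Summable fun w => pstep p (m - layer y) y w := pstep_summable hp0 hp1 _ _
  have hsc : Summable fun w => pstep p (m - layer x) x w - pstep p (m - layer y) y w :=
    hsa.sub hsb
  have hscabs : Summable fun w => |pstep p (m - layer x) x w - pstep p (m - layer y) y w| :=
    summable_abs_iff.mpr hsc
  have hq : ∀ w : V, Summable fun v => pstep p k w v := fun w => pstep_summable hp0 hp1 _ _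
  have hsxq : ∀ v, Summable fun w => pstep p (m - layer x) x w * pstep p k w v := by
    intro v
    apply summable_weight hsa (fun w => pstep_nonneg hp0 _ x w)
    intro w
    rw [abs_of_nonneg (pstep_nonneg hp0 k w v)]
    exact pstep_le_one hp0 hp1 k w v
  have hsyq : ∀ v, Summable fun w => pstep p (m - layer y) y w * pstep p k w v := by
    intro v
    apply summable_weight hsb (fun w => pstep_nonneg hp0 _ y w)
    intro w
    rw [abs_of_nonneg (pstep_nonneg hp0 k w v)]
    exact pstep_le_one hp0 hp1 k w v
  have hcw : ∀ v, Summable fun w =>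
      (pstep p (m - layer x) x w - pstep p (m - layer y) y w) * pstep p k w v := fun v =>
    (((hsxq v).sub (hsyq v)).congr (fun w => (sub_mul _ _ _).symm))
  have hdiff : ∀ v, pstep p (n - layer x) x v - pstep p (n - layer y) y v
      = ∑' w, (pstep p (m - layer x) x w - pstep p (m - layer y) y w) * pstep p k w v := by
    intro v
    rw [hax, hay, pstep_add hp0 hp1 k (m - layer x) x v, pstep_add hp0 hp1 k (m - layer y) y v,
      ← Summable.tsum_sub (hsxq v) (hsyq v)]
    apply tsum_congr; intro w; ring
  have habs_sum : ∀ v, Summable fun w =>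
      |(pstep p (m - layer x) x w - pstep p (m - layer y) y w) * pstep p k w v| := fun v =>
    summable_abs_iff.mpr (hcw v)
  have habs : ∀ v, |pstep p (n - layer x) x v - pstep p (n - layer y) y v|
      ≤ ∑' w, |pstep p (m - layer x) x w - pstep p (m - layer y) y w| * pstep p k w v := by
    intro v
    rw [hdiff v]
    calc |∑' w, (pstep p (m - layer x) x w - pstep p (m - layer y) y w) * pstep p k w v|
        ≤ ∑' w, |(pstep p (m - layer x) x w - pstep p (m - layer y) y w) * pstep p k w v| :=
          abs_tsum_le_tsum_abs _ (habs_sum v)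
      _ = ∑' w, |pstep p (m - layer x) x w - pstep p (m - layer y) y w| * pstep p k w v :=
          tsum_congr fun w => by rw [abs_mul, abs_of_nonneg (pstep_nonneg hp0 k w v)]
  have hsmarg1 : Summable fun w =>
      ∑' v, |pstep p (m - layer x) x w - pstep p (m - layer y) y w| * pstep p k w v := by
    have he : (fun w => ∑' v, |pstep p (m - layer x) x w - pstep p (m - layer y) y w|
        * pstep p k w v)
        = fun w => |pstep p (m - layer x) x w - pstep p (m - layer y) y w| := by
      funext w; rw [tsum_mul_left, pstep_tsum hp0 hp1 k w, mul_one]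
    rw [he]; exact hscabs
  have hprodsum : Summable (Function.uncurry fun w v =>
      |pstep p (m - layer x) x w - pstep p (m - layer y) y w| * pstep p k w v) :=
    summable_uncurry_nonneg _
      (fun w v => mul_nonneg (abs_nonneg _) (pstep_nonneg hp0 k w v))
      (fun w => (hq w).mul_left _) hsmarg1
  have hmarg : Summable fun v =>
      ∑' w, |pstep p (m - layer x) x w - pstep p (m - layer y) y w| * pstep p k w v :=
    summable_snd_marginal _ hprodsum
  have hn_abs : Summable fun v => |pstep p (n - layer x) x v - pstep p (n - layer y) y v| :=
    summable_abs_iff.mpr ((pstep_summable hp0 hp1 _ x).sub (pstep_summable hp0 hp1 _ y))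
  have hDn : ∑' v, |pstep p (n - layer x) x v - pstep p (n - layer y) y v|
      ≤ ∑' w, |pstep p (m - layer x) x w - pstep p (m - layer y) y w| := by
    calc ∑' v, |pstep p (n - layer x) x v - pstep p (n - layer y) y v|
        ≤ ∑' v, ∑' w, |pstep p (m - layer x) x w - pstep p (m - layer y) y w| * pstep p k w v :=
          Summable.tsum_le_tsum habs hn_abs hmarg
      _ = ∑' w, ∑' v, |pstep p (m - layer x) x w - pstep p (m - layer y) y w| * pstep p k w v :=
          fubini_nonneg _ (fun w v => mul_nonneg (abs_nonneg _) (pstep_nonneg hp0 k w v))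
            (fun w => (hq w).mul_left _) hsmarg1
      _ = ∑' w, |pstep p (m - layer x) x w - pstep p (m - layer y) y w| :=
          tsum_congr fun w => by rw [tsum_mul_left, pstep_tsum hp0 hp1 k w, mul_one]
  simp only [tvAt']
  exact mul_le_mul_of_nonneg_left hDn (by norm_num)


end Aux

lemma tvAt_eq {V : Type*} (p : V → V → ℝ) (layer : V → ℕ) (x y : V) (n : ℕ) :
    tvAt p layer x y n = tvAt' p layer x y n := rfl


/-- Let `V` be a countable set partitioned into layers `V = V₀ ⊔ V₁ ⊔ V₂ ⊔ …` and let `p` be a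
Markov transition kernel on `V` such that `p(x,·)` is supported on `V_{i+1}` whenever `x ∈ V_i`.
Then for all `x, y ∈ V` the limit `d(x,y) = lim_n d_TV(X_n^{(x)}, X_n^{(y)})` exists (the
sequence being nonincreasing in `n`), and equals
`(1/2)·sup{ |h(x) − h(y)| : h : V → ℝ bounded by 1 and harmonic }`. -/
theorem tv_limit_eq_sup_harmonic {V : Type*} [Countable V] (layer : V → ℕ)
    (p : V → V → ℝ) (hp0 : ∀ x y, 0 ≤ p x y) (hp1 : ∀ x, ∑' y, p x y = 1)
    (hlayer : ∀ x y, p x y ≠ 0 → layer y = layer x + 1)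
    (x y : V) :
    (∀ m n : ℕ, max (layer x) (layer y) ≤ m → m ≤ n →
      tvAt p layer x y n ≤ tvAt p layer x y m) ∧
    Filter.Tendsto (fun n => tvAt p layer x y n) Filter.atTop
      (nhds ((1 / 2) * sSup { r : ℝ | ∃ h : V → ℝ,
        (∀ v, |h v| ≤ 1) ∧ (∀ z, h z = ∑' w, p z w * h w) ∧ r = |h x - h y| })) := by
  classical
  have hmono : ∀ m n : ℕ, max (layer x) (layer y) ≤ m → m ≤ n →
      tvAt p layer x y n ≤ tvAt p layer x y m := by
    intro m n hm hmn
    rw [tvAt_eq, tvAt_eq]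
    exact tvAt'_mono layer hp0 hp1 x y hm hmn
  refine ⟨hmono, ?_⟩
  set S : Set ℝ := { r : ℝ | ∃ h : V → ℝ,
    (∀ v, |h v| ≤ 1) ∧ (∀ z, h z = ∑' w, p z w * h w) ∧ r = |h x - h y| } with hSdef
  set M := max (layer x) (layer y) with hMdef
  have hnonneg : ∀ n, 0 ≤ tvAt p layer x y n := fun n =>
    mul_nonneg (by norm_num) (tsum_nonneg fun v => abs_nonneg _)
  set T : ℕ → ℝ := fun k => tvAt p layer x y (k + M) with hTdef
  have hTanti : Antitone T := by
    intro i j hij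
    exact hmono (i + M) (j + M) (by omega) (by omega)
  have hTbdd : BddBelow (Set.range T) := ⟨0, by rintro r ⟨k, rfl⟩; exact hnonneg _⟩
  set L := ⨅ k, T k with hLdef
  have hTlim : Filter.Tendsto T Filter.atTop (nhds L) := tendsto_atTop_ciInf hTanti hTbdd
  have hlim : Filter.Tendsto (fun n => tvAt p layer x y n) Filter.atTop (nhds L) :=
    (Filter.tendsto_add_atTop_iff_nat M).mp hTlim
  have hL0 : 0 ≤ L := le_ciInf fun k => hnonneg _
  -- summability of the basic quantities
  have hsax : ∀ n : ℕ, Summable fun v => pstep p (n - layer x) x v :=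
    fun n => pstep_summable hp0 hp1 _ _
  have hsby : ∀ n : ℕ, Summable fun v => pstep p (n - layer y) y v :=
    fun n => pstep_summable hp0 hp1 _ _
  have hsc : ∀ n : ℕ, Summable fun v =>
      pstep p (n - layer x) x v - pstep p (n - layer y) y v := fun n => (hsax n).sub (hsby n)
  have hscabs : ∀ n : ℕ, Summable fun v =>
      |pstep p (n - layer x) x v - pstep p (n - layer y) y v| :=
    fun n => summable_abs_iff.mpr (hsc n)
  -- upper bound : every element of S is at most 2 * L
  have hS0 : (0 : ℝ) ∈ S := by
    refine ⟨fun _ => 0, fun v => by norm_num, fun z => by simp, by norm_num⟩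
  have hSbdd : BddAbove S := by
    refine ⟨2, ?_⟩
    rintro r ⟨h, hb, _, rfl⟩
    calc |h x - h y| ≤ |h x| + |h y| := abs_sub _ _
      _ ≤ 1 + 1 := add_le_add (hb x) (hb y)
      _ = 2 := by norm_num
  have hupper : sSup S ≤ 2 * L := by
    apply csSup_le ⟨0, hS0⟩
    rintro r ⟨h, hb, hh, rfl⟩
    have key : ∀ k : ℕ, |h x - h y| ≤ 2 * T k := by
      intro k
      set n := k + M with hn
      have hwx : Summable fun v => pstep p (n - layer x) x v * h v :=
        summable_weight (hsax n) (fun v => pstep_nonneg hp0 _ x v) hb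
      have hwy : Summable fun v => pstep p (n - layer y) y v * h v :=
        summable_weight (hsby n) (fun v => pstep_nonneg hp0 _ y v) hb
      have hdiff : h x - h y = ∑' v,
          (pstep p (n - layer x) x v - pstep p (n - layer y) y v) * h v := by
        rw [harmonic_iterate hp0 hp1 hb hh (n - layer x) x,
          harmonic_iterate hp0 hp1 hb hh (n - layer y) y, ← Summable.tsum_sub hwx hwy]
        apply tsum_congr; intro v; ring
      have hws : Summable fun v =>
          |(pstep p (n - layer x) x v - pstep p (n - layer y) y v) * h v| := by
        apply Summable.of_nonneg_of_le (fun v => abs_nonneg _) _ (hscabs n)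
        intro v
        rw [abs_mul]
        calc |pstep p (n - layer x) x v - pstep p (n - layer y) y v| * |h v|
            ≤ |pstep p (n - layer x) x v - pstep p (n - layer y) y v| * 1 :=
              mul_le_mul_of_nonneg_left (hb v) (abs_nonneg _)
          _ = _ := mul_one _
      have : |h x - h y| ≤ ∑' v, |pstep p (n - layer x) x v - pstep p (n - layer y) y v| := by
        rw [hdiff]
        calc |∑' v, (pstep p (n - layer x) x v - pstep p (n - layer y) y v) * h v|
            ≤ ∑' v, |(pstep p (n - layer x) x v - pstep p (n - layer y) y v) * h v| :=
              abs_tsum_le_tsum_abs _ hws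
          _ ≤ ∑' v, |pstep p (n - layer x) x v - pstep p (n - layer y) y v| := by
              apply Summable.tsum_le_tsum _ hws (hscabs n)
              intro v
              rw [abs_mul]
              calc |pstep p (n - layer x) x v - pstep p (n - layer y) y v| * |h v|
                  ≤ |pstep p (n - layer x) x v - pstep p (n - layer y) y v| * 1 :=
                    mul_le_mul_of_nonneg_left (hb v) (abs_nonneg _)
                _ = _ := mul_one _
      have hT : T k = (1/2) * ∑' v,
          |pstep p (n - layer x) x v - pstep p (n - layer y) y v| := rfl
      rw [hT] at *
      linarith
    have h2 : |h x - h y| / 2 ≤ L := le_ciInf fun k => by linarith [key k]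
    linarith
  -- lower bound : 2 * L belongs to S
  set U : Ultrafilter ℕ := Ultrafilter.of Filter.atTop with hUdef
  have hUle : (U : Filter ℕ) ≤ Filter.atTop := Ultrafilter.of_le _
  set f : ℕ → V → ℝ := fun n v =>
    if 0 ≤ pstep p (n - layer x) x v - pstep p (n - layer y) y v then 1 else -1 with hfdef
  have hfabs : ∀ n v, |f n v| ≤ 1 := by
    intro n v; simp only [hfdef]; split <;> norm_num
  have hcf : ∀ n v, (pstep p (n - layer x) x v - pstep p (n - layer y) y v) * f n v
      = |pstep p (n - layer x) x v - pstep p (n - layer y) y v| := by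
    intro n v
    simp only [hfdef]
    split
    · rename_i hc
      rw [mul_one, abs_of_nonneg hc]
    · rename_i hc
      rw [abs_of_neg (lt_of_not_ge hc)]; ring
  set g : ℕ → V → ℝ := fun n v => ∑' w, pstep p (n - layer v) v w * f n w with hgdef
  have hgmem : ∀ n v, g n v ∈ Set.Icc (-1 : ℝ) 1 := by
    intro n v
    have habs : |g n v| ≤ 1 :=
      abs_tsum_weight (pstep_summable hp0 hp1 _ v) (fun w => pstep_nonneg hp0 _ v w)
        (hfabs n) (pstep_tsum hp0 hp1 _ v)
    obtain ⟨h1, h2⟩ := abs_le.mp habs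
    exact ⟨h1, h2⟩
  have hcomp : ∀ v : V, ∃ c ∈ Set.Icc (-1:ℝ) 1,
      Filter.Tendsto (fun n => g n v) (U : Filter ℕ) (nhds c) := by
    intro v
    have hsub : (Ultrafilter.map (fun n => g n v) U : Filter ℝ)
        ≤ Filter.principal (Set.Icc (-1:ℝ) 1) := by
      rw [Filter.le_principal_iff]
      rw [Ultrafilter.coe_map, Filter.mem_map]
      apply Filter.univ_mem'
      intro n
      exact hgmem n v
    obtain ⟨c, hc, hlimc⟩ := (isCompact_Icc (a := (-1:ℝ)) (b := 1)).ultrafilter_le_nhds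
      (Ultrafilter.map (fun n => g n v) U) hsub
    exact ⟨c, hc, hlimc⟩
  choose h hIcc hTend using hcomp
  have habs1 : ∀ v, |h v| ≤ 1 := fun v => abs_le.mpr ⟨(hIcc v).1, (hIcc v).2⟩
  -- h is harmonic
  have hharm : ∀ z, h z = ∑' w, p z w * h w := by
    intro z
    have hev : ∀ n, layer z + 1 ≤ n → g n z = ∑' u, p z u * g n u := by
      intro n hn
      set m := n - (layer z + 1) with hmdef
      have h1 : n - layer z = 1 + m := by omega
      have hps : ∀ w, pstep p (n - layer z) z w = ∑' u, p z u * pstep p m u w := by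
        intro w
        rw [h1, pstep_add hp0 hp1 m 1 z w]
        apply tsum_congr; intro u; rw [pstep_one hp1]
      have hG : Summable (Function.uncurry fun u w => p z u * pstep p m u w) := by
        apply summable_uncurry_nonneg
        · exact fun u w => mul_nonneg (hp0 z u) (pstep_nonneg hp0 m u w)
        · exact fun u => (pstep_summable hp0 hp1 m u).mul_left _
        · have he : (fun u => ∑' w, p z u * pstep p m u w) = fun u => p z u := by
            funext u; rw [tsum_mul_left, pstep_tsum hp0 hp1 m u, mul_one]
          rw [he]; exact summable_p hp1 z
      have hF : Summable (Function.uncurry fun u w => p z u * (pstep p m u w * f n w)) := by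
        apply Summable.of_norm_bounded hG
        rintro ⟨u, w⟩
        simp only [Function.uncurry_apply_pair, Real.norm_eq_abs]
        rw [abs_mul, abs_mul, abs_of_nonneg (hp0 z u), abs_of_nonneg (pstep_nonneg hp0 m u w)]
        apply mul_le_mul_of_nonneg_left _ (hp0 z u)
        calc pstep p m u w * |f n w| ≤ pstep p m u w * 1 :=
              mul_le_mul_of_nonneg_left (hfabs n w) (pstep_nonneg hp0 m u w)
          _ = pstep p m u w := mul_one _
      calc g n z = ∑' w, pstep p (n - layer z) z w * f n w := rfl
        _ = ∑' w, ∑' u, p z u * (pstep p m u w * f n w) := by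
            apply tsum_congr; intro w
            rw [hps w, ← tsum_mul_right]
            apply tsum_congr; intro u; ring
        _ = ∑' u, ∑' w, p z u * (pstep p m u w * f n w) := Summable.tsum_comm hF
        _ = ∑' u, p z u * ∑' w, pstep p m u w * f n w := by
            apply tsum_congr; intro u; rw [tsum_mul_left]
        _ = ∑' u, p z u * g n u := by
            apply tsum_congr; intro u
            by_cases hz : p z u = 0
            · rw [hz, zero_mul, zero_mul]
            · have hl : layer u = layer z + 1 := hlayer z u hz
              have hmu : n - layer u = m := by omega
              have : g n u = ∑' w, pstep p m u w * f n w := by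
                simp only [hgdef, hmu]
              rw [this]
    have hRHS : Filter.Tendsto (fun n => ∑' u, p z u * g n u) (U : Filter ℕ)
        (nhds (∑' u, p z u * h u)) := by
      apply tendsto_tsum_of_dominated_convergence (bound := fun u => p z u) (summable_p hp1 z)
      · intro u; exact (hTend u).const_mul _
      · apply Filter.Eventually.of_forall
        intro n u
        rw [Real.norm_eq_abs, abs_mul, abs_of_nonneg (hp0 z u)]
        have : |g n u| ≤ 1 := abs_le.mpr ⟨(hgmem n u).1, (hgmem n u).2⟩
        calc p z u * |g n u| ≤ p z u * 1 := mul_le_mul_of_nonneg_left this (hp0 z u)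
          _ = p z u := mul_one _
    have hEq : (fun n => g n z) =ᶠ[(U : Filter ℕ)] fun n => ∑' u, p z u * g n u := by
      have : ∀ᶠ n in Filter.atTop, layer z + 1 ≤ n := Filter.eventually_ge_atTop _
      exact (this.filter_mono hUle).mono hev
    exact tendsto_nhds_unique (hTend z) (hRHS.congr' hEq.symm)
  -- the difference of the g's computes the total variation distance
  have hdiff2 : ∀ n : ℕ, g n x - g n y = 2 * tvAt p layer x y n := by
    intro n
    have hsx : Summable fun w => pstep p (n - layer x) x w * f n w :=
      summable_weight (hsax n) (fun w => pstep_nonneg hp0 _ x w) (hfabs n)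
    have hsy : Summable fun w => pstep p (n - layer y) y w * f n w :=
      summable_weight (hsby n) (fun w => pstep_nonneg hp0 _ y w) (hfabs n)
    have h1 : g n x - g n y = ∑' w,
        (pstep p (n - layer x) x w - pstep p (n - layer y) y w) * f n w := by
      have hgx : g n x = ∑' w, pstep p (n - layer x) x w * f n w := rfl
      have hgy : g n y = ∑' w, pstep p (n - layer y) y w * f n w := rfl
      rw [hgx, hgy, ← Summable.tsum_sub hsx hsy]
      apply tsum_congr; intro w; ring
    rw [h1]
    have h2 : ∑' w, (pstep p (n - layer x) x w - pstep p (n - layer y) y w) * f n w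
        = ∑' w, |pstep p (n - layer x) x w - pstep p (n - layer y) y w| :=
      tsum_congr (hcf n)
    rw [h2]
    show _ = 2 * ((1/2) * ∑' w, |pstep p (n - layer x) x w - pstep p (n - layer y) y w|)
    ring
  have hgxy : Filter.Tendsto (fun n => g n x - g n y) (U : Filter ℕ) (nhds (h x - h y)) :=
    (hTend x).sub (hTend y)
  have hDlim : Filter.Tendsto (fun n => 2 * tvAt p layer x y n) (U : Filter ℕ)
      (nhds (2 * L)) := ((hlim.const_mul 2).mono_left hUle)
  have heq2 : h x - h y = 2 * L := by
    apply tendsto_nhds_unique hgxy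
    have : (fun n => g n x - g n y) = fun n => 2 * tvAt p layer x y n := funext hdiff2
    rw [this]
    exact hDlim
  have hmem : 2 * L ∈ S := by
    refine ⟨h, habs1, hharm, ?_⟩
    rw [heq2, abs_of_nonneg (by linarith : (0:ℝ) ≤ 2 * L)]
  have hlower : 2 * L ≤ sSup S := le_csSup hSbdd hmem
  have hS : sSup S = 2 * L := le_antisymm hupper hlower
  have hfinal : (1/2 : ℝ) * sSup S = L := by rw [hS]; ring
  rw [hfinal]
  exact hlim


end LayeredChain
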